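/- Let h be harmonic on a domain D in ℂ. Then: (1) if h attains a local maximum at some point of D, then h is constant on D; (2) if for every boundary point ζ of D (the boundary taken in the one-point compactification ℂ∞ = ℂ ∪ {∞}) one has limsup_{z→ζ, z∈D} h(z) ≤ 0, then h ≤ 0 on D. -/

import Mathlib

open MeasureTheory Complex Filter Topology
open scoped ENNReal

noncomputable def posE (x : EReal) : ℝ≥0∞ := if x = ⊤ then ⊤ else ENNReal.ofReal x.toReal

noncomputable def eInt {X : Type*} [MeasurableSpace X] (μ : Measure X) (f : X → EReal) : EReal :=
  ENNReal.toEReal (∫⁻ x, posE (f x) ∂μ) - ENNReal.toEReal (∫⁻ x, posE (-(f x)) ∂μ)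

def Subharmonic (u : ℂ → EReal) (D : Set ℂ) : Prop :=
  UpperSemicontinuousOn u D ∧
    ∀ w ∈ D, ∃ ρ > (0:ℝ), ∀ r : ℝ, 0 ≤ r → r < ρ →
      ∀ g : ℝ → ℝ,
        (∀ t ∈ Set.Icc (0:ℝ) (2*Real.pi),
          u (w + (r : ℂ) * Complex.exp (t * Complex.I)) ≤ (g t : EReal)) →
        IntervalIntegrable g volume 0 (2*Real.pi) →
        u w ≤ (((1/(2*Real.pi)) * ∫ t in (0:ℝ)..(2*Real.pi), g t : ℝ) : EReal)

def HarmonicOnC (h : ℂ → ℝ) (U : Set ℂ) : Prop :=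
  ContDiffOn ℝ 2 h U ∧
    ∀ z ∈ U, iteratedFDeriv ℝ 2 h z ![1, 1] + iteratedFDeriv ℝ 2 h z ![Complex.I, Complex.I] = 0

def HarmonicOnRn {n : ℕ} (h : EuclideanSpace ℝ (Fin n) → ℝ)
    (U : Set (EuclideanSpace ℝ (Fin n))) : Prop :=
  ContDiffOn ℝ 2 h U ∧
    ∀ x ∈ U, ∑ i : Fin n,
      iteratedFDeriv ℝ 2 h x ![EuclideanSpace.single i 1, EuclideanSpace.single i 1] = 0

/-- Boundary of `D` taken in the one-point compactification of `ℂ`. -/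
def cbdry (D : Set ℂ) : Set (OnePoint ℂ) :=
  frontier ((fun z : ℂ => (z : OnePoint ℂ)) '' D)

/-- The filter of approach to `ζ ∈ ∂D ⊆ ℂ∞` through points of `D`. -/
noncomputable def bfilter (D : Set ℂ) (ζ : OnePoint ℂ) : Filter ℂ :=
  Filter.comap (fun z : ℂ => (z : OnePoint ℂ)) (nhds ζ) ⊓ Filter.principal D

noncomputable def elog (x : ℝ) : EReal :=
  if x = 0 then (⊥ : EReal) else ((Real.log x : ℝ) : EReal)

noncomputable def logPotential (μ : Measure ℂ) (z : ℂ) : EReal :=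
  eInt μ (fun w => elog (‖w - z‖))

noncomputable def lapl (φ : ℂ → ℝ) (z : ℂ) : ℝ :=
  iteratedFDeriv ℝ 2 φ z ![1, 1] + iteratedFDeriv ℝ 2 φ z ![Complex.I, Complex.I]

noncomputable def energy (μ : Measure ℂ) : EReal :=
  - eInt μ (fun z => eInt μ (fun w => elog (‖z - w‖)))

noncomputable def smoothConv (u : ℂ → EReal) (χ : ℂ → ℝ) (r : ℝ) (z : ℂ) : EReal :=
  eInt volume (fun w => (((r ^ 2)⁻¹ * χ (w / (r : ℂ)) : ℝ) : EReal) * u (z - w))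

section Helpers

open Metric Set

lemma clm_ext_c {F : Type*} [NormedAddCommGroup F] [NormedSpace ℝ F]
    {L L' : ℂ →L[ℝ] F} (h1 : L 1 = L' 1) (hI : L I = L' I) : L = L' := by
  ext z
  have hz : z = z.re • (1:ℂ) + z.im • I := by
    simp [Complex.real_smul, Complex.re_add_im]
  rw [hz, map_add, map_add, L.map_smul, L.map_smul, L'.map_smul, L'.map_smul, h1, hI]

lemma exists_clin (L : ℂ →L[ℝ] ℂ) (hCR : L I = I * L 1) :
    ∃ M : ℂ →L[ℂ] ℂ, M.restrictScalars ℝ = L := by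
  refine ⟨L 1 • ContinuousLinearMap.id ℂ ℂ, clm_ext_c ?_ ?_⟩ <;>
    simp [hCR, mul_comm]

noncomputable def grad (h : ℂ → ℝ) (z : ℂ) : ℂ :=
  (fderiv ℝ h z 1 : ℂ) - I * (fderiv ℝ h z I : ℂ)

lemma grad_diff {h : ℂ → ℝ} {D : Set ℂ} (hD : IsOpen D)
    (h2 : ContDiffOn ℝ 2 h D)
    (hlap : ∀ z ∈ D, iteratedFDeriv ℝ 2 h z ![1, 1] + iteratedFDeriv ℝ 2 h z ![Complex.I, Complex.I] = 0)
    {z : ℂ} (hz : z ∈ D) : DifferentiableAt ℂ (grad h) z := by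
  have hat : ContDiffAt ℝ 2 h z := h2.contDiffAt (hD.mem_nhds hz)
  have hf1 : ContDiffAt ℝ 1 (fderiv ℝ h) z := hat.fderiv_right (by norm_num)
  have hfd : DifferentiableAt ℝ (fderiv ℝ h) z := hf1.differentiableAt (by norm_num)
  set H := fderiv ℝ (fderiv ℝ h) z with hH
  have hev : ∀ᶠ y in nhds z, HasFDerivAt h (fderiv ℝ h y) y := by
    filter_upwards [hD.mem_nhds hz] with y hy
    exact ((h2.differentiableOn (by norm_num)).differentiableAt (hD.mem_nhds hy)).hasFDerivAt
  have hsymm : ∀ v w : ℂ, H v w = H w v :=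
    fun v w => second_derivative_symmetric_of_eventually hev hfd.hasFDerivAt v w
  have hlap' : H 1 1 + H I I = 0 := by
    have := hlap z hz
    rwa [iteratedFDeriv_two_apply, iteratedFDeriv_two_apply] at this
  set ev1 : (ℂ →L[ℝ] ℝ) →L[ℝ] ℝ := ContinuousLinearMap.apply ℝ ℝ (1:ℂ)
  set evI : (ℂ →L[ℝ] ℝ) →L[ℝ] ℝ := ContinuousLinearMap.apply ℝ ℝ (I:ℂ)
  have hG : HasFDerivAt (grad h)
      ((Complex.ofRealCLM.comp (ev1.comp H)) - I • (Complex.ofRealCLM.comp (evI.comp H))) z := by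
    have d1 : HasFDerivAt (fun w => (fderiv ℝ h w 1 : ℂ)) (Complex.ofRealCLM.comp (ev1.comp H)) z :=
      (Complex.ofRealCLM.hasFDerivAt.comp z ((ev1.hasFDerivAt.comp z hfd.hasFDerivAt)))
    have d2 : HasFDerivAt (fun w => (fderiv ℝ h w I : ℂ)) (Complex.ofRealCLM.comp (evI.comp H)) z :=
      (Complex.ofRealCLM.hasFDerivAt.comp z ((evI.hasFDerivAt.comp z hfd.hasFDerivAt)))
    exact d1.sub (d2.const_mul I)
  set L := (Complex.ofRealCLM.comp (ev1.comp H)) - I • (Complex.ofRealCLM.comp (evI.comp H))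
  have hCR : L I = I * L 1 := by
    simp only [L, ContinuousLinearMap.sub_apply, ContinuousLinearMap.smul_apply,
      ContinuousLinearMap.comp_apply, Complex.ofRealCLM_apply, ContinuousLinearMap.apply_apply,
      smul_eq_mul, ev1, evI]
    have e1 : H I I = -(H 1 1) := by linarith [hlap']
    rw [e1, hsymm I 1]
    push_cast
    linear_combination (↑((H 1) I) : ℂ) * Complex.I_sq
  obtain ⟨M, hM⟩ := exists_clin L hCR
  exact (hasFDerivAt_of_restrictScalars ℝ hG hM).differentiableAt

lemma exists_primitive {g : ℂ → ℂ} {z₀ : ℂ} (hg : AnalyticAt ℂ g z₀) :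
    ∃ r > (0:ℝ), ∃ f : ℂ → ℂ, ∀ z ∈ Metric.ball z₀ r, HasDerivAt f (g z) z := by
  obtain ⟨p, rr, hp⟩ := hg
  obtain ⟨r', hr'0, hr'⟩ := ENNReal.lt_iff_exists_nnreal_btwn.mp hp.r_pos
  have hr'p : (r' : ℝ≥0∞) < p.radius := lt_of_lt_of_le hr' hp.r_le
  have hr'pos : (0:ℝ) < r' := by exact_mod_cast hr'0
  set c : ℕ → ℂ := fun n => p.coeff n
  set G : ℕ → ℂ → ℂ := fun n z => (c n / (n+1)) * (z - z₀)^(n+1)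
  set G' : ℕ → ℂ → ℂ := fun n z => c n * (z - z₀)^n
  have hderiv : ∀ n y, y ∈ Metric.ball z₀ (r':ℝ) → HasDerivAt (G n) (G' n y) y := by
    intro n y _
    have h1 : HasDerivAt (fun z : ℂ => (z - z₀)^(n+1)) ((n+1) * (y - z₀)^n) y := by
      simpa using (((hasDerivAt_id y).sub_const z₀).fun_pow (n+1))
    have := h1.const_mul (c n / (n+1))
    refine this.congr_deriv ?_
    have hne : ((n:ℂ)+1) ≠ 0 := Nat.cast_add_one_ne_zero n
    simp only [G', G]
    rw [← mul_assoc, div_mul_cancel₀ _ hne]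
  have hsum : Summable (fun n => ‖p n‖ * (r':ℝ)^n) := p.summable_norm_mul_pow hr'p
  have hbound : ∀ n y, y ∈ Metric.ball z₀ (r':ℝ) → ‖G' n y‖ ≤ ‖p n‖ * (r':ℝ)^n := by
    intro n y hy
    have hc : ‖c n‖ ≤ ‖p n‖ := by
      simpa [c] using (p n).le_opNorm (fun _ => (1:ℂ))
    have : ‖y - z₀‖ ≤ (r':ℝ) := by
      rw [mem_ball, dist_eq_norm] at hy; exact le_of_lt hy
    calc ‖G' n y‖ = ‖c n‖ * ‖y - z₀‖^n := by simp [G', norm_mul, norm_pow]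
      _ ≤ ‖p n‖ * (r':ℝ)^n := by gcongr
  have hg0 : Summable fun n => G n z₀ := by
    simp only [G, sub_self, ne_eq, Nat.succ_ne_zero, not_false_iff, zero_pow, mul_zero,
      Nat.add_eq_zero, one_ne_zero, and_false]
    exact summable_zero
  refine ⟨r', hr'pos, fun z => ∑' n, G n z, fun z hz => ?_⟩
  have key : HasDerivAt (fun w => ∑' n, G n w) (∑' n, G' n z) z :=
    hasDerivAt_tsum_of_isPreconnected hsum isOpen_ball (convex_ball z₀ (r':ℝ)).isPreconnected
      hderiv hbound (mem_ball_self hr'pos) hg0 hz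
  have hzball : z - z₀ ∈ Metric.eball (0:ℂ) rr := by
    rw [Metric.mem_eball, edist_zero_right, enorm_eq_nnnorm]
    refine lt_trans ?_ hr'
    rw [mem_ball, dist_eq_norm] at hz
    exact_mod_cast hz
  have hs := hp.hasSum hzball
  have : g z = ∑' n, G' n z := by
    have := hs.tsum_eq
    simp only [add_sub_cancel] at this
    rw [← this]
    congr 1
    ext n
    rw [p.apply_eq_pow_smul_coeff]
    simp [G', c, smul_eq_mul]
    ring
  rwa [← this] at key

lemma loc_rep {h : ℂ → ℝ} {D : Set ℂ} (hD : IsOpen D)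
    (h2 : ContDiffOn ℝ 2 h D)
    (hlap : ∀ z ∈ D, iteratedFDeriv ℝ 2 h z ![1, 1] + iteratedFDeriv ℝ 2 h z ![Complex.I, Complex.I] = 0)
    {z₀ : ℂ} (hz₀ : z₀ ∈ D) :
    ∃ r > (0:ℝ), ball z₀ r ⊆ D ∧ ∃ f : ℂ → ℂ,
      (∀ z ∈ ball z₀ r, HasDerivAt f (grad h z) z) ∧
      ∀ z ∈ ball z₀ r, h z = (f z).re - ((f z₀).re - h z₀) := by
  have hdiff : DifferentiableOn ℂ (grad h) D :=
    fun z hz => (grad_diff hD h2 hlap hz).differentiableWithinAt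
  have hga : AnalyticAt ℂ (grad h) z₀ := hdiff.analyticAt (hD.mem_nhds hz₀)
  obtain ⟨r₁, hr₁, f, hf⟩ := exists_primitive hga
  obtain ⟨r₂, hr₂, hball⟩ := Metric.isOpen_iff.mp hD z₀ hz₀
  refine ⟨min r₁ r₂, lt_min hr₁ hr₂, (ball_subset_ball (min_le_right _ _)).trans hball, f,
    fun z hz => hf z (ball_subset_ball (min_le_left _ _) hz), ?_⟩
  set s := ball z₀ (min r₁ r₂)
  have hsD : s ⊆ D := (ball_subset_ball (min_le_right _ _)).trans hball
  have hs1 : s ⊆ ball z₀ r₁ := ball_subset_ball (min_le_left _ _)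
  set φ : ℂ → ℝ := fun w => (f w).re - h w
  have hφ : ∀ z ∈ s, HasFDerivAt φ (0 : ℂ →L[ℝ] ℝ) z := by
    intro z hz
    have hfd : HasFDerivAt f (ContinuousLinearMap.smulRight (1 : ℂ →L[ℂ] ℂ) (grad h z)) z :=
      (hf z (hs1 hz)).hasFDerivAt
    have hre : HasFDerivAt (fun w => (f w).re)
        (Complex.reCLM.comp ((ContinuousLinearMap.smulRight (1 : ℂ →L[ℂ] ℂ)
          (grad h z)).restrictScalars ℝ)) z :=
      Complex.reCLM.hasFDerivAt.comp z (hfd.restrictScalars ℝ)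
    have hhd : HasFDerivAt h (fderiv ℝ h z) z :=
      ((h2.differentiableOn (by norm_num)).differentiableAt
        (hD.mem_nhds (hsD hz))).hasFDerivAt
    have := hre.sub hhd
    refine this.congr_fderiv ?_
    refine (clm_ext_c ?_ ?_).symm
    · simp [grad]
    · simp [grad, Complex.add_im]
  have hconst : ∀ z ∈ s, φ z = φ z₀ := by
    intro z hz
    refine (convex_ball z₀ (min r₁ r₂)).is_const_of_fderivWithin_eq_zero
      (fun w hw => ((hφ w hw).differentiableAt).differentiableWithinAt) ?_ hz
      (mem_ball_self (lt_min hr₁ hr₂))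
    intro w hw
    rw [fderivWithin_of_isOpen isOpen_ball hw, (hφ w hw).fderiv]
  intro z hz
  have := hconst z hz
  simp only [φ] at this
  linarith

variable {h : ℂ → ℝ} {D : Set ℂ}

lemma harm_analytic (hD : IsOpen D) (h2 : ContDiffOn ℝ 2 h D)
    (hlap : ∀ z ∈ D, iteratedFDeriv ℝ 2 h z ![1, 1] + iteratedFDeriv ℝ 2 h z ![Complex.I, Complex.I] = 0) :
    AnalyticOnNhd ℝ h D := by
  intro z₀ hz₀
  obtain ⟨r, hr, hsub, f, hf, hrep⟩ := loc_rep hD h2 hlap hz₀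
  have hfd : DifferentiableOn ℂ f (ball z₀ r) :=
    fun z hz => (hf z hz).differentiableAt.differentiableWithinAt
  have hfan : AnalyticOnNhd ℂ f (ball z₀ r) := hfd.analyticOnNhd isOpen_ball
  have hfanR : AnalyticAt ℝ f z₀ :=
    (hfan z₀ (mem_ball_self hr)).restrictScalars
  have han : AnalyticAt ℝ (fun z => (f z).re - ((f z₀).re - h z₀)) z₀ :=
    ((Complex.reCLM.analyticAt _).comp hfanR).sub analyticAt_const
  exact han.congr (by
    filter_upwards [isOpen_ball.mem_nhds (mem_ball_self hr)] with z hz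
    exact (hrep z hz).symm)

lemma harm_loc_const (hD : IsOpen D) (h2 : ContDiffOn ℝ 2 h D)
    (hlap : ∀ z ∈ D, iteratedFDeriv ℝ 2 h z ![1, 1] + iteratedFDeriv ℝ 2 h z ![Complex.I, Complex.I] = 0)
    {z₀ : ℂ} (hz₀ : z₀ ∈ D) (hmax : IsLocalMaxOn h D z₀) :
    ∀ᶠ z in 𝓝 z₀, h z = h z₀ := by
  obtain ⟨r, hr, hsub, f, hf, hrep⟩ := loc_rep hD h2 hlap hz₀
  have hloc : IsLocalMax h z₀ := by
    have heq := hD.nhdsWithin_eq hz₀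
    unfold IsLocalMax IsMaxFilter
    rw [← heq]
    exact hmax
  have hdiffev : ∀ᶠ z in 𝓝 z₀, DifferentiableAt ℂ (fun w => Complex.exp (f w)) z := by
    filter_upwards [isOpen_ball.mem_nhds (mem_ball_self hr)] with z hz
    exact (hf z hz).differentiableAt.cexp
  have hnormmax : IsLocalMax (norm ∘ fun w => Complex.exp (f w)) z₀ := by
    have hev : ∀ᶠ z in 𝓝 z₀, h z ≤ h z₀ := hloc
    filter_upwards [hev, isOpen_ball.mem_nhds (mem_ball_self hr)] with z hz1 hz2
    simp only [Function.comp_apply, Complex.norm_exp]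
    have : (f z).re = h z + ((f z₀).re - h z₀) := by
      have := hrep z hz2; linarith
    have h0 : (f z₀).re = h z₀ + ((f z₀).re - h z₀) := by ring
    rw [this, h0]
    exact Real.exp_le_exp.mpr (by linarith)
  have := Complex.eventually_eq_of_isLocalMax_norm hdiffev hnormmax
  filter_upwards [this, isOpen_ball.mem_nhds (mem_ball_self hr)] with z hz1 hz2
  have hnorm : ‖Complex.exp (f z)‖ = ‖Complex.exp (f z₀)‖ := by
    rw [hz1]
  rw [Complex.norm_exp, Complex.norm_exp] at hnorm
  have hre : (f z).re = (f z₀).re := Real.exp_injective hnorm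
  have := hrep z hz2
  linarith

end Helpers
theorem stmt3 (D : Set ℂ) (hD : IsOpen D) (hconn : IsConnected D)
    (h : ℂ → ℝ) (hh : HarmonicOnC h D) :
    ((∃ z₀ ∈ D, IsLocalMaxOn h D z₀) → ∀ z ∈ D, ∀ w ∈ D, h z = h w) ∧
    ((∀ ζ ∈ cbdry D, Filter.limsup (fun z => (h z : EReal)) (bfilter D ζ) ≤ 0) →
      ∀ z ∈ D, h z ≤ 0) := by
  obtain ⟨h2, hlap⟩ := hh
  have part1 : (∃ z₀ ∈ D, IsLocalMaxOn h D z₀) → ∀ z ∈ D, ∀ w ∈ D, h z = h w := by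
    rintro ⟨z₀, hz₀, hmax⟩
    have han := harm_analytic hD h2 hlap
    have hconstEq : Set.EqOn h (fun _ => h z₀) D :=
      han.eqOn_of_preconnected_of_eventuallyEq analyticOnNhd_const hconn.isPreconnected hz₀
        (harm_loc_const hD h2 hlap hz₀ hmax)
    intro z hz w hw
    rw [hconstEq hz, hconstEq hw]
  refine ⟨part1, ?_⟩
  intro hbd z hz
  by_contra hpos
  push_neg at hpos
  set ε := h z with hε
  set cc : ℂ → OnePoint ℂ := fun w => (w : OnePoint ℂ) with hcc
  have hoe : Topology.IsOpenEmbedding cc := OnePoint.isOpenEmbedding_coe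
  have hNeBot : ∀ T : Set ℂ, T ⊆ D → ∀ ζ, ζ ∈ closure (cc '' T) →
      (bfilter D ζ ⊓ Filter.principal T).NeBot := by
    intro T hTD ζ hζ
    have h1 : (nhds ζ ⊓ Filter.principal (cc '' T)).NeBot := mem_closure_iff_clusterPt.mp hζ
    have h2' : Set.range cc ∈ nhds ζ ⊓ Filter.principal (cc '' T) :=
      Filter.mem_inf_of_right (Filter.mem_principal.mpr (Set.image_subset_range _ _))
    have h3 : (Filter.comap cc (nhds ζ ⊓ Filter.principal (cc '' T))).NeBot :=
      h1.comap_of_range_mem h2'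
    have h4 : Filter.comap cc (nhds ζ ⊓ Filter.principal (cc '' T)) =
        Filter.comap cc (nhds ζ) ⊓ Filter.principal T := by
      rw [Filter.comap_inf, Filter.comap_principal,
        Set.preimage_image_eq _ hoe.injective]
    rw [h4] at h3
    have h5 : bfilter D ζ ⊓ Filter.principal T =
        Filter.comap cc (nhds ζ) ⊓ Filter.principal T := by
      unfold bfilter
      rw [inf_assoc, Filter.inf_principal, Set.inter_eq_self_of_subset_right hTD]
    rwa [h5]
  have hlims : ∀ (T : Set ℂ) (a : ℝ), T ⊆ D → (∀ w ∈ T, a ≤ h w) → ∀ ζ, ζ ∈ closure (cc '' T) →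
      (a : EReal) ≤ Filter.limsup (fun w => (h w : EReal)) (bfilter D ζ) := by
    intro T a hTD hTa ζ hζ
    have hfreq : ∃ᶠ w in bfilter D ζ, (a : EReal) ≤ (h w : EReal) := by
      rw [Filter.frequently_iff_neBot]
      haveI := hNeBot T hTD ζ hζ
      refine Filter.neBot_of_le (f := bfilter D ζ ⊓ Filter.principal T) ?_
      refine inf_le_inf_left _ (Filter.principal_mono.mpr ?_)
      intro w hw
      exact EReal.coe_le_coe_iff.mpr (hTa w hw)
    exact Filter.le_limsup_of_frequently_le hfreq (Filter.isBoundedUnder_of ⟨⊤, fun x => le_top⟩)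
  have hfrne : (cbdry D).Nonempty := by
    by_contra hemp
    rw [Set.not_nonempty_iff_eq_empty] at hemp
    have hclopen : IsClopen (cc '' D) := isClopen_iff_frontier_eq_empty.mpr hemp
    rcases isClopen_iff.mp hclopen with hc | hc
    · exact absurd hc (Set.nonempty_iff_ne_empty.mp (hconn.nonempty.image cc))
    · have : (OnePoint.infty : OnePoint ℂ) ∈ cc '' D := hc ▸ Set.mem_univ _
      exact OnePoint.infty_notMem_image_coe this
  set S : Set ℂ := {w ∈ D | ε ≤ h w} with hS
  have hSD : S ⊆ D := fun w hw => hw.1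
  have hK : closure (cc '' S) ⊆ cc '' D := by
    intro ζ hζ
    have h1 : ζ ∈ closure (cc '' D) :=
      closure_mono (Set.image_mono hSD) hζ
    rw [closure_eq_self_union_frontier] at h1
    rcases h1 with hin | hfr
    · exact hin
    · exfalso
      have hle := hbd ζ hfr
      have hge := hlims S ε hSD (fun w hw => hw.2) ζ hζ
      have : (ε : ℝ) ≤ 0 := by exact_mod_cast le_trans hge hle
      linarith
  have hScl : IsCompact (closure (cc '' S)) := isClosed_closure.isCompact
  set T : Set ℂ := cc ⁻¹' closure (cc '' S) with hT
  have hTc : IsCompact T := by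
    rw [hoe.isEmbedding.isCompact_iff]
    rwa [Set.image_preimage_eq_of_subset (hK.trans (Set.image_subset_range _ _))]
  have hTD : T ⊆ D := by
    intro w hw
    obtain ⟨w', hw', hww⟩ := hK hw
    exact (hoe.injective hww) ▸ hw'
  have hST : S ⊆ T := fun w hw => subset_closure (Set.mem_image_of_mem _ hw)
  have hzS : z ∈ S := ⟨hz, le_refl ε⟩
  have hTne : T.Nonempty := ⟨z, hST hzS⟩
  have hcont : ContinuousOn h T := h2.continuousOn.mono hTD
  obtain ⟨z₁, hz₁T, hz₁max⟩ := hTc.exists_isMaxOn hTne hcont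
  have hz₁D : z₁ ∈ D := hTD hz₁T
  have hz₁ε : ε ≤ h z₁ := hz₁max (hST hzS)
  have hglob : ∀ w ∈ D, h w ≤ h z₁ := by
    intro w hw
    by_cases hcase : ε ≤ h w
    · exact hz₁max (hST ⟨hw, hcase⟩)
    · push_neg at hcase; linarith
  have hmax : IsLocalMaxOn h D z₁ :=
    eventually_nhdsWithin_of_forall hglob
  have hconst := part1 ⟨z₁, hz₁D, hmax⟩
  obtain ⟨ζ₀, hζ₀⟩ := hfrne
  have hζ₀cl : ζ₀ ∈ closure (cc '' D) := frontier_subset_closure hζ₀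
  have hge := hlims D (h z₁) subset_rfl (fun w hw => (hconst z₁ hz₁D w hw).le) ζ₀ hζ₀cl
  have hle := hbd ζ₀ hζ₀
  have : h z₁ ≤ 0 := by exact_mod_cast le_trans hge hle
  linarith
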